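/- Let F be a field and m a positive integer. The map sending a pair (h_1, h_2) of coprime polynomials over F, with h_2 monic of degree m and deg h_1 < m, to the tuple of the first kd coefficients (b_1, …, b_{kd}) of the Laurent expansion h_1(T)/h_2(T) = ∑_{r ≥ 1} b_r T^{−r}, is injective whenever m ≤ kd/2. -/

import Mathlib

private theorem algmap_single (F : Type) [Field F] (a : F) :
    (algebraMap F (HahnSeries ℤ F)) a = HahnSeries.single (0:ℤ) a := by
  rw [HahnSeries.algebraMap_apply', PowerSeries.algebraMap_apply,
    show (algebraMap F F) a = a from rfl, HahnSeries.ofPowerSeries_C, HahnSeries.C_apply]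

private theorem coeff_aeval (F : Type) [Field F] (q : Polynomial F) (z : ℤ) :
    (Polynomial.aeval (HahnSeries.single (-1:ℤ) (1:F)) q).coeff z
      = if z ≤ 0 then q.coeff (-z).toNat else 0 := by
  induction q using Polynomial.induction_on' with
  | add p q hp hq =>
      simp only [map_add, HahnSeries.coeff_add, hp, hq, Polynomial.coeff_add]
      split <;> simp
  | monomial n a =>
      rw [Polynomial.aeval_monomial, algmap_single, HahnSeries.single_pow, one_pow,
        show n • (-1:ℤ) = -(n:ℤ) by simp, HahnSeries.single_mul_single, zero_add, mul_one,
        HahnSeries.coeff_single]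
      simp only [Polynomial.coeff_monomial]
      by_cases hz : z = -(n:ℤ)
      · rw [if_pos hz, if_pos (by omega), if_pos (by omega)]
      · rw [if_neg hz]
        split
        · rw [if_neg (by omega)]
        · rfl

private theorem aeval_ne_zero' (F : Type) [Field F] (q : Polynomial F) (hq : q ≠ 0) :
    Polynomial.aeval (HahnSeries.single (-1:ℤ) (1:F)) q ≠ 0 := by
  intro h
  have := coeff_aeval F q (-(q.natDegree : ℤ))
  rw [h] at this
  simp only [HahnSeries.coeff_zero, if_pos (by omega : -(q.natDegree:ℤ) ≤ 0)] at this
  rw [show (-(-(q.natDegree:ℤ))).toNat = q.natDegree by omega] at this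
  exact Polynomial.leadingCoeff_ne_zero.mpr hq this.symm

private theorem order_aeval (F : Type) [Field F] (q : Polynomial F) (hq : q ≠ 0) :
    (Polynomial.aeval (HahnSeries.single (-1:ℤ) (1:F)) q).order = -(q.natDegree : ℤ) := by
  refine le_antisymm (HahnSeries.order_le_of_coeff_ne_zero ?_) ?_
  · rw [coeff_aeval, if_pos (by omega : -(q.natDegree:ℤ) ≤ 0),
      show (-(-(q.natDegree:ℤ))).toNat = q.natDegree by omega]
    exact Polynomial.leadingCoeff_ne_zero.mpr hq
  · by_contra h
    push_neg at h
    have h2 := (mt HahnSeries.coeff_order_eq_zero.mp (aeval_ne_zero' F q hq))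
    rw [coeff_aeval] at h2
    set o := (Polynomial.aeval (HahnSeries.single (-1:ℤ) (1:F)) q).order with ho
    rcases le_or_gt o 0 with h3 | h3
    · rw [if_pos h3] at h2
      exact h2 (Polynomial.coeff_eq_zero_of_natDegree_lt (by omega))
    · rw [if_neg (by omega)] at h2
      exact h2 rfl

/-- for m ≤ kd/2, the map sending a pair (h₁,h₂) of coprime polynomials,
with h₂ monic of degree m and deg h₁ < m, to the first kd coefficients (b_1,…,b_{kd}) of
the expansion h₁(T)/h₂(T) = ∑_{r≥1} b_r T^{−r}, is injective.  The expansion is taken in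
`LaurentSeries F`, whose variable `x = HahnSeries.single 1 1` represents T^{−1}; so b_r is
the coefficient of the expansion of h₁(x⁻¹)/h₂(x⁻¹) at the x-exponent r. -/
theorem stmt_3 (F : Type) [Field F] (k d m : ℕ) (hk : 1 ≤ k) (hd : 1 ≤ d)
    (hm : 1 ≤ m) (hkd : 2 * m ≤ k * d)
    (x : LaurentSeries F) (hx : x = HahnSeries.single (1 : ℤ) (1 : F))
    (h1 h2 h1' h2' : Polynomial F)
    (hmon : h2.Monic) (hdeg2 : h2.natDegree = m) (hdeg1 : h1.degree < (m : WithBot ℕ))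
    (hcop : IsCoprime h1 h2)
    (hmon' : h2'.Monic) (hdeg2' : h2'.natDegree = m) (hdeg1' : h1'.degree < (m : WithBot ℕ))
    (hcop' : IsCoprime h1' h2')
    (hcoeff : ∀ r : ℕ, 1 ≤ r → r ≤ k * d →
      (Polynomial.aeval x⁻¹ h1 / Polynomial.aeval x⁻¹ h2).coeff (r : ℤ)
        = (Polynomial.aeval x⁻¹ h1' / Polynomial.aeval x⁻¹ h2').coeff (r : ℤ)) :
    h1 = h1' ∧ h2 = h2' := by
  have hinv : x⁻¹ = HahnSeries.single (-1:ℤ) (1:F) := by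
    rw [hx]
    refine inv_eq_of_mul_eq_one_right ?_
    rw [HahnSeries.single_mul_single]
    norm_num
  rw [hinv] at hcoeff
  set t : LaurentSeries F := HahnSeries.single (-1:ℤ) (1:F) with ht
  set A : Polynomial F →ₐ[F] LaurentSeries F := Polynomial.aeval t with hA
  -- degree bounds
  have hd1 : h1.natDegree < m := by
    rcases eq_or_ne h1 0 with rfl | h0
    · simpa using (show 0 < m by omega)
    · exact (Polynomial.natDegree_lt_iff_degree_lt h0).mpr hdeg1
  have hd1' : h1'.natDegree < m := by
    rcases eq_or_ne h1' 0 with rfl | h0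
    · simpa using (show 0 < m by omega)
    · exact (Polynomial.natDegree_lt_iff_degree_lt h0).mpr hdeg1'
  have h2ne : h2 ≠ 0 := hmon.ne_zero
  have h2ne' : h2' ≠ 0 := hmon'.ne_zero
  have hA2 : A h2 ≠ 0 := aeval_ne_zero' F h2 h2ne
  have hA2' : A h2' ≠ 0 := aeval_ne_zero' F h2' h2ne'
  set p : Polynomial F := h1 * h2' - h1' * h2 with hpdef
  have hp : p = 0 := by
    by_contra hp
    have hn : p.natDegree < 2 * m := by
      have b1 : (h1 * h2').natDegree ≤ h1.natDegree + h2'.natDegree :=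
        Polynomial.natDegree_mul_le
      have b2 : (h1' * h2).natDegree ≤ h1'.natDegree + h2.natDegree :=
        Polynomial.natDegree_mul_le
      have := Polynomial.natDegree_sub_le (h1 * h2') (h1' * h2)
      rw [← hpdef] at this
      omega
    have hAp : A p ≠ 0 := aeval_ne_zero' F p hp
    set D : LaurentSeries F := A h1 / A h2 - A h1' / A h2' with hD
    have hDeq : D = A p / (A h2 * A h2') := by
      rw [hD, div_sub_div _ _ hA2 hA2', hpdef]
      rw [map_sub, map_mul, map_mul]
      ring_nf
    have hDne : D ≠ 0 := by
      rw [hDeq]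
      exact div_ne_zero hAp (mul_ne_zero hA2 hA2')
    -- order of D
    have hden : (A h2 * A h2').order = -(2 * m : ℤ) := by
      rw [HahnSeries.order_mul hA2 hA2', order_aeval F h2 h2ne, order_aeval F h2' h2ne',
        hdeg2, hdeg2']
      push_cast; ring
    have hdenne : A h2 * A h2' ≠ 0 := mul_ne_zero hA2 hA2'
    have hinvord : ((A h2 * A h2')⁻¹).order = (2 * m : ℤ) := by
      have h1' : (A h2 * A h2') * (A h2 * A h2')⁻¹ = 1 :=
        mul_inv_cancel₀ hdenne
      have h2'' := HahnSeries.order_mul hdenne (inv_ne_zero hdenne)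
      rw [h1', HahnSeries.order_one, hden] at h2''
      omega
    have hordD : D.order = (2 * m : ℤ) - p.natDegree := by
      rw [hDeq, div_eq_mul_inv, HahnSeries.order_mul hAp (inv_ne_zero hdenne),
        order_aeval F p hp, hinvord]
      ring
    -- the order is in [1, k*d]
    set r : ℕ := 2 * m - p.natDegree with hr
    have hrval : D.order = (r : ℤ) := by rw [hordD]; push_cast; omega
    have hr1 : 1 ≤ r := by omega
    have hr2 : r ≤ k * d := by omega
    have hc := hcoeff r hr1 hr2
    have : D.coeff (r : ℤ) = 0 := by
      rw [hD, HahnSeries.coeff_sub, hc, sub_self]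
    rw [← hrval] at this
    exact (mt HahnSeries.coeff_order_eq_zero.mp hDne) this
  have heq : h1 * h2' = h1' * h2 := by
    have := sub_eq_zero.mp hp
    exact this
  have hdvd : h2 ∣ h2' := by
    refine (hcop.symm).dvd_of_dvd_mul_left ?_
    rw [heq]
    exact ⟨h1', mul_comm _ _⟩
  have hdvd' : h2' ∣ h2 := by
    refine (hcop'.symm).dvd_of_dvd_mul_left ?_
    rw [← heq]
    exact ⟨h1, mul_comm _ _⟩
  have h22 : h2 = h2' :=
    Polynomial.eq_of_monic_of_associated hmon hmon' (associated_of_dvd_dvd hdvd hdvd')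
  refine ⟨?_, h22⟩
  rw [← h22] at heq
  exact mul_right_cancel₀ h2ne heq
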